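/- Let d = pq with p, q distinct primes. Then span_ℝ(A ∪ B ∪ C ∪ D) = KD^r; i.e. a self-adjoint operator on ℂ^d has everywhere-real KD distribution if and only if it is a real linear combination of the projectors in A ∪ B ∪ C ∪ D. -/

import Mathlib

open Complex Matrix
open scoped ComplexOrder

noncomputable section

/-- `omega n = exp(2 π i / n)`, a primitive `n`-th root of unity. -/
def omega (n : ℕ) : ℂ := Complex.exp (2 * Real.pi * Complex.I / n)

/-- The standard basis vector `a i` of `ℂ^d`. -/
def stdVec (d : ℕ) (i : Fin d) : Fin d → ℂ := fun k => if k = i then 1 else 0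

/-- The Fourier (DFT) basis vector `b j = (1/√d) ∑ i, ω_d^(i j) • a i`. -/
def fourierVec (d : ℕ) (j : Fin d) : Fin d → ℂ :=
  fun i => ((1 / Real.sqrt d : ℝ) : ℂ) * omega d ^ (i.val * j.val)

/-- The rank-one projector `|v⟩⟨v|` of a vector `v`, as a matrix. -/
def proj (d : ℕ) (v : Fin d → ℂ) : Matrix (Fin d) (Fin d) ℂ :=
  Matrix.of fun i k => v i * (starRingEnd ℂ) (v k)

/-- The Kirkwood-Dirac quasiprobability `Q i j F = ⟨b j|a i⟩ * ⟨a i|F|b j⟩`. -/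
def KDQ (d : ℕ) (F : Matrix (Fin d) (Fin d) ℂ) (i j : Fin d) : ℂ :=
  (starRingEnd ℂ) (fourierVec d j i) * ∑ k, F i k * fourierVec d j k

/-- The set `KD⁺` of KD classical density matrices: positive semidefinite, trace one,
and all KD quasiprobabilities are nonnegative reals. -/
def KDplus (d : ℕ) : Set (Matrix (Fin d) (Fin d) ℂ) :=
  {ρ | ρ.PosSemidef ∧ ρ.trace = 1 ∧
    ∀ i j, (KDQ d ρ i j).im = 0 ∧ 0 ≤ (KDQ d ρ i j).re}

/-- The set `KD^r` of self-adjoint operators whose KD distribution is everywhere real. -/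
def KDr (d : ℕ) : Set (Matrix (Fin d) (Fin d) ℂ) :=
  {F | F.IsHermitian ∧ ∀ i j, (KDQ d F i j).im = 0}

/-- `A = {|a i⟩⟨a i| : i ∈ ℤ_d}`. -/
def setA (d : ℕ) : Set (Matrix (Fin d) (Fin d) ℂ) :=
  {M | ∃ i : Fin d, M = proj d (stdVec d i)}

/-- `B = {|b j⟩⟨b j| : j ∈ ℤ_d}`. -/
def setB (d : ℕ) : Set (Matrix (Fin d) (Fin d) ℂ) :=
  {M | ∃ j : Fin d, M = proj d (fourierVec d j)}

/-- For `d = p * q` : `ψ m s = (1/√q) ∑ k ∈ ℤ_q, ω_q^(s k) • a (k p + m)`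
(so the `i`-th coordinate is nonzero iff `i ≡ m [MOD p]`, with `k = i / p`). -/
def psiPQ (d p q : ℕ) (m : Fin p) (s : Fin q) : Fin d → ℂ :=
  fun i => if i.val % p = m.val then
    ((1 / Real.sqrt q : ℝ) : ℂ) * omega q ^ (s.val * (i.val / p)) else 0

/-- For `d = p * q` : `φ m' s' = (1/√p) ∑ k ∈ ℤ_p, ω_p^(s' k) • a (k q + m')`. -/
def phiPQ (d p q : ℕ) (m' : Fin q) (s' : Fin p) : Fin d → ℂ :=
  fun i => if i.val % q = m'.val then
    ((1 / Real.sqrt p : ℝ) : ℂ) * omega p ^ (s'.val * (i.val / q)) else 0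

/-- For `d = p ^ 2` : `C = {|ψ m s⟩⟨ψ m s| : m, s ∈ ℤ_p}`. -/
def setC2 (d p : ℕ) : Set (Matrix (Fin d) (Fin d) ℂ) :=
  {M | ∃ m s : Fin p, M = proj d (psiPQ d p p m s)}

/-- For `d = p * q` : `C = {|ψ m s⟩⟨ψ m s| : m ∈ ℤ_p, s ∈ ℤ_q}`. -/
def setC (d p q : ℕ) : Set (Matrix (Fin d) (Fin d) ℂ) :=
  {M | ∃ (m : Fin p) (s : Fin q), M = proj d (psiPQ d p q m s)}

/-- For `d = p * q` : `D = {|φ m' s'⟩⟨φ m' s'| : m' ∈ ℤ_q, s' ∈ ℤ_p}`. -/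
def setD (d p q : ℕ) : Set (Matrix (Fin d) (Fin d) ℂ) :=
  {M | ∃ (m' : Fin q) (s' : Fin p), M = proj d (phiPQ d p q m' s')}

/-- Matrix entries in the Fourier basis: `⟨b k|G|b j⟩`. -/
def entryB (d : ℕ) (G : Matrix (Fin d) (Fin d) ℂ) (k j : Fin d) : ℂ :=
  ∑ i, ∑ l, (starRingEnd ℂ) (fourierVec d k i) * G i l * fourierVec d j l


lemma omega_ne_zero (n : ℕ) : omega n ≠ 0 := Complex.exp_ne_zero _

lemma omega_isPrimitiveRoot {n : ℕ} (hn : n ≠ 0) : IsPrimitiveRoot (omega n) n :=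
  Complex.isPrimitiveRoot_exp n hn

lemma omega_zpow_self {n : ℕ} (hn : n ≠ 0) : omega n ^ (n:ℤ) = 1 :=
  ((omega_isPrimitiveRoot hn).zpow_eq_one_iff_dvd _).mpr dvd_rfl

lemma omega_zpow_congr {n : ℕ} (hn : n ≠ 0) {a b : ℤ} (h : a ≡ b [ZMOD (n:ℕ)]) :
    omega n ^ a = omega n ^ b := by
  obtain ⟨k, hk⟩ : (n:ℤ) ∣ a - b := Int.ModEq.dvd h.symm
  have ha : a = b + n * k := by linarith
  rw [ha, zpow_add₀ (omega_ne_zero n), _root_.zpow_mul, omega_zpow_self hn, _root_.one_zpow, mul_one]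

lemma conj_omega (n : ℕ) : (starRingEnd ℂ) (omega n) = (omega n)⁻¹ := by
  rw [omega, ← Complex.exp_conj, ← Complex.exp_neg]
  congr 1
  simp only [map_div₀, _root_.map_mul, Complex.conj_I, Complex.conj_ofReal, map_ofNat,
    Complex.conj_natCast]
  ring_nf

lemma conj_omega_zpow (n : ℕ) (a : ℤ) :
    (starRingEnd ℂ) (omega n ^ a) = omega n ^ (-a) := by
  rw [map_zpow₀, conj_omega, _root_.inv_zpow, ← _root_.zpow_neg]

lemma rootsum {n : ℕ} (hn : n ≠ 0) (t : ℤ) :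
    ∑ j : Fin n, omega n ^ (t * (j.val:ℤ)) = if (n:ℤ) ∣ t then (n:ℂ) else 0 := by
  have hconv : ∀ j : Fin n, omega n ^ (t * (j.val:ℤ)) = (omega n ^ t) ^ (j.val) := by
    intro j; rw [_root_.zpow_mul, zpow_natCast]
  by_cases h : (n:ℤ) ∣ t
  · have h1 : omega n ^ t = 1 := ((omega_isPrimitiveRoot hn).zpow_eq_one_iff_dvd t).mpr h
    simp [hconv, h1, if_pos h]
  · rw [if_neg h]
    have hx : omega n ^ t ≠ 1 := fun hh =>
      h (((omega_isPrimitiveRoot hn).zpow_eq_one_iff_dvd t).mp hh)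
    rw [Finset.sum_congr rfl (fun j _ => hconv j),
      Fin.sum_univ_eq_sum_range (fun i => (omega n ^ t) ^ i) n, geom_sum_eq hx]
    have hxn : (omega n ^ t) ^ n = 1 := by
      rw [← zpow_natCast, ← _root_.zpow_mul, mul_comm, _root_.zpow_mul, omega_zpow_self hn, _root_.one_zpow]
    rw [hxn]; simp

-- Fin val congruences
lemma natmod_modeq (d x : ℕ) : ((x % d : ℕ) : ℤ) ≡ (x:ℤ) [ZMOD d] := by
  have : ((x % d : ℕ) : ℤ) = (x:ℤ) % (d:ℤ) := by push_cast; rfl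
  rw [this]; exact Int.emod_emod_of_dvd _ dvd_rfl

lemma fin_val_add {d : ℕ} (a b : Fin d) :
    (((a+b).val : ℕ) : ℤ) ≡ (a.val:ℤ) + b.val [ZMOD d] := by
  rw [Fin.val_add]
  have := natmod_modeq d (a.val + b.val)
  simpa using this

lemma fin_val_sub {d : ℕ} (a b : Fin d) :
    (((a-b).val : ℕ) : ℤ) ≡ (a.val:ℤ) - b.val [ZMOD d] := by
  rw [Fin.sub_def]
  have h1 := natmod_modeq d (d - b.val + a.val)
  have h2 : ((d - b.val + a.val : ℕ) : ℤ) = (d:ℤ) - b.val + a.val := by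
    push_cast [Nat.cast_sub b.isLt.le]; ring
  calc (((d - b.val + a.val) % d : ℕ) : ℤ) ≡ ((d - b.val + a.val : ℕ) : ℤ) [ZMOD d] := h1
    _ = (d:ℤ) - b.val + a.val := h2
    _ ≡ 0 - b.val + a.val [ZMOD d] := by
        exact Int.ModEq.add_right _ (Int.ModEq.sub_right _ (Int.modEq_zero_iff_dvd.mpr dvd_rfl))
    _ = (a.val:ℤ) - b.val := by ring

lemma fin_val_nsmul {d : ℕ} [NeZero d] (k : ℕ) (a : Fin d) :
    (((k • a : Fin d).val : ℕ) : ℤ) ≡ (k:ℤ) * a.val [ZMOD d] := by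
  open Fin.CommRing in have h : (k • a : Fin d) = ((k : Fin d)) * a := nsmul_eq_mul k a
  rw [h, Fin.val_mul, Fin.val_natCast]
  calc (((k % d) * a.val % d : ℕ) : ℤ) ≡ ((k % d) * a.val : ℕ) [ZMOD d] := natmod_modeq _ _
    _ = ((k % d : ℕ) : ℤ) * a.val := by push_cast; ring
    _ ≡ (k:ℤ) * a.val [ZMOD d] := Int.ModEq.mul_right _ (natmod_modeq d k)

lemma fin_eq_of_modeq {d : ℕ} {x y : Fin d} (h : (x.val:ℤ) ≡ (y.val:ℤ) [ZMOD d]) : x = y := by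
  have hd := Int.ModEq.dvd h
  have hx := x.isLt; have hy := y.isLt
  have h0 : (y.val:ℤ) - x.val = 0 := by
    refine Int.eq_zero_of_abs_lt_dvd hd ?_
    rw [abs_lt]; constructor <;> push_cast <;> omega
  exact Fin.ext (by omega)

lemma fv_apply (d : ℕ) (j x : Fin d) :
    fourierVec d j x = ((1 / Real.sqrt d : ℝ) : ℂ) * omega d ^ ((x.val:ℤ) * j.val) := by
  rw [fourierVec]; norm_cast

lemma fv_conj (d : ℕ) (j x : Fin d) :
    (starRingEnd ℂ) (fourierVec d j x)
      = ((1 / Real.sqrt d : ℝ) : ℂ) * omega d ^ (-((x.val:ℤ) * j.val)) := by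
  rw [fv_apply, _root_.map_mul, Complex.conj_ofReal, conj_omega_zpow]

def shiftCond (d : ℕ) (F : Matrix (Fin d) (Fin d) ℂ) : Prop :=
  ∀ a b : Fin d, F a b = F (a + a - b) a

lemma real_of_shift {d : ℕ} (hd : d ≠ 0) {F : Matrix (Fin d) (Fin d) ℂ}
    (hF : F.IsHermitian) (hs : shiftCond d F) (i j : Fin d) : (KDQ d F i j).im = 0 := by
  haveI : NeZero d := ⟨hd⟩
  rw [← Complex.conj_eq_iff_im]
  set c : ℂ := ((1 / Real.sqrt d : ℝ) : ℂ) with hc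
  have key : ∀ k : Fin d, fourierVec d j i *
      ((starRingEnd ℂ) (F i ((i+i) - k)) * (starRingEnd ℂ) (fourierVec d j ((i+i)-k)))
      = (starRingEnd ℂ) (fourierVec d j i) * (F i k * fourierVec d j k) := by
    intro k
    have h1 : (starRingEnd ℂ) (F i ((i+i) - k)) = F i k :=
      (hF.apply ((i+i)-k) i).trans (hs i k).symm
    rw [h1, fv_conj, fv_conj, fv_apply, fv_apply]
    have hM : ((((i+i) - k).val:ℤ)) ≡ (i.val:ℤ) + i.val - k.val [ZMOD d] :=
      (fin_val_sub (i+i) k).trans ((fin_val_add i i).sub_right _)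
    have hexp : omega d ^ ((i.val:ℤ)*j.val) * omega d ^ (-(((((i+i)-k).val:ℤ)) * j.val))
        = omega d ^ (-((i.val:ℤ)*j.val)) * omega d ^ ((k.val:ℤ) * j.val) := by
      rw [← zpow_add₀ (omega_ne_zero d), ← zpow_add₀ (omega_ne_zero d)]
      refine omega_zpow_congr hd ?_
      have h2 := (hM.mul_right (j.val:ℤ)).neg.add_left ((i.val:ℤ)*j.val)
      refine h2.trans ?_
      have : (i.val:ℤ)*j.val + -(((i.val:ℤ) + i.val - k.val) * j.val)
          = -((i.val:ℤ)*j.val) + (k.val:ℤ) * j.val := by ring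
      rw [this]
    linear_combination (c * c * F i k) * hexp
  calc (starRingEnd ℂ) (KDQ d F i j)
      = ∑ k, fourierVec d j i * ((starRingEnd ℂ) (F i k) * (starRingEnd ℂ) (fourierVec d j k)) := by
        rw [KDQ, _root_.map_mul, map_sum, Complex.conj_conj, Finset.mul_sum]
        exact Finset.sum_congr rfl fun k _ => by rw [_root_.map_mul]
    _ = ∑ k, fourierVec d j i * ((starRingEnd ℂ) (F i ((i+i) - k)) *
          (starRingEnd ℂ) (fourierVec d j ((i+i)-k))) :=
        (Fintype.sum_equiv (Equiv.subLeft (i+i)) _ _ (fun k => by simp [Equiv.subLeft])).symm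
    _ = ∑ k, (starRingEnd ℂ) (fourierVec d j i) * (F i k * fourierVec d j k) :=
        Finset.sum_congr rfl (fun k _ => key k)
    _ = KDQ d F i j := by rw [KDQ, Finset.mul_sum]

lemma shift_of_real {d : ℕ} (hd : d ≠ 0) {F : Matrix (Fin d) (Fin d) ℂ}
    (hF : F.IsHermitian) (h : ∀ i j, (KDQ d F i j).im = 0) : shiftCond d F := by
  haveI : NeZero d := ⟨hd⟩
  intro a b
  set c : ℂ := ((1 / Real.sqrt d : ℝ) : ℂ) with hc
  have hcc : (d:ℂ) * (c * c) = 1 := by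
    rw [hc]
    have h1 : (1 / Real.sqrt d) * (1 / Real.sqrt d) = 1/(d:ℝ) := by
      rw [div_mul_div_comm, one_mul, Real.mul_self_sqrt (Nat.cast_nonneg d)]
    rw [← Complex.ofReal_mul, h1]
    have : ((d:ℝ):ℂ) ≠ 0 := by
      simp [Nat.cast_ne_zero.mpr hd]
    push_cast
    field_simp
  have S1 : ∑ j, KDQ d F a j * omega d ^ (((a.val:ℤ) - b.val) * j.val) = F a b := by
    have step1 : ∀ j : Fin d, KDQ d F a j * omega d ^ (((a.val:ℤ) - b.val) * j.val)
        = ∑ k, (c*c) * F a k * omega d ^ (((k.val:ℤ) - b.val) * j.val) := by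
      intro j
      rw [KDQ, Finset.mul_sum, Finset.sum_mul]
      refine Finset.sum_congr rfl fun k _ => ?_
      rw [fv_conj, fv_apply]
      have hz : omega d ^ (-((a.val:ℤ) * j.val)) * omega d ^ ((k.val:ℤ) * j.val)
          * omega d ^ (((a.val:ℤ) - b.val) * j.val)
          = omega d ^ (((k.val:ℤ) - b.val) * j.val) := by
        rw [← zpow_add₀ (omega_ne_zero d), ← zpow_add₀ (omega_ne_zero d)]; congr 1; ring
      linear_combination (c * c * F a k) * hz
    rw [Finset.sum_congr rfl (fun j _ => step1 j), Finset.sum_comm]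
    have step2 : ∀ k : Fin d, ∑ j : Fin d, (c*c) * F a k * omega d ^ (((k.val:ℤ) - b.val) * j.val)
        = if k = b then (c*c) * F a k * d else 0 := by
      intro k
      rw [← Finset.mul_sum, rootsum hd]
      by_cases hk : k = b
      · subst hk; simp
      · rw [if_neg ?_, if_neg hk, mul_zero]
        intro hdvd
        exact hk (fin_eq_of_modeq (Int.ModEq.symm (Int.modEq_iff_dvd.mpr (by simpa using hdvd))))
    rw [Finset.sum_congr rfl (fun k _ => step2 k), Finset.sum_ite_eq' Finset.univ b
      (fun k => (c*c) * F a k * d)]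
    simp only [Finset.mem_univ, if_true]
    linear_combination (F a b) * hcc
  have S2 : ∑ j, (starRingEnd ℂ) (KDQ d F a j) * omega d ^ (((a.val:ℤ) - b.val) * j.val)
      = (starRingEnd ℂ) (F a (a + a - b)) := by
    have step1 : ∀ j : Fin d, (starRingEnd ℂ) (KDQ d F a j) * omega d ^ (((a.val:ℤ) - b.val) * j.val)
        = ∑ k, (c*c) * (starRingEnd ℂ) (F a k)
            * omega d ^ (((a.val:ℤ) + a.val - b.val - k.val) * j.val) := by
      intro j
      rw [KDQ, _root_.map_mul, map_sum, Complex.conj_conj, Finset.mul_sum, Finset.sum_mul]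
      refine Finset.sum_congr rfl fun k _ => ?_
      rw [_root_.map_mul, fv_conj, fv_apply]
      have hz : omega d ^ ((a.val:ℤ) * j.val) * omega d ^ (-((k.val:ℤ) * j.val))
          * omega d ^ (((a.val:ℤ) - b.val) * j.val)
          = omega d ^ (((a.val:ℤ) + a.val - b.val - k.val) * j.val) := by
        rw [← zpow_add₀ (omega_ne_zero d), ← zpow_add₀ (omega_ne_zero d)]; congr 1; ring
      linear_combination (c * c * (starRingEnd ℂ) (F a k)) * hz
    rw [Finset.sum_congr rfl (fun j _ => step1 j), Finset.sum_comm]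
    have hM : (((a + a - b).val:ℤ)) ≡ (a.val:ℤ) + a.val - b.val [ZMOD d] :=
      (fin_val_sub (a+a) b).trans ((fin_val_add a a).sub_right _)
    have step2 : ∀ k : Fin d, ∑ j : Fin d, (c*c) * (starRingEnd ℂ) (F a k)
          * omega d ^ (((a.val:ℤ) + a.val - b.val - k.val) * j.val)
        = if k = a + a - b then (c*c) * (starRingEnd ℂ) (F a k) * d else 0 := by
      intro k
      rw [← Finset.mul_sum, rootsum hd]
      by_cases hk : k = a + a - b
      · subst hk
        rw [if_pos rfl, if_pos hM.dvd]
      · rw [if_neg ?_, if_neg hk, mul_zero]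
        intro hdvd
        apply hk
        have h1 : ((a.val:ℤ) + a.val - b.val) ≡ (k.val:ℤ) [ZMOD d] :=
          Int.ModEq.symm (Int.modEq_iff_dvd.mpr (by simpa using hdvd))
        exact (fin_eq_of_modeq (hM.trans h1)).symm
    rw [Finset.sum_congr rfl (fun k _ => step2 k), Finset.sum_ite_eq' Finset.univ (a+a-b)
      (fun k => (c*c) * (starRingEnd ℂ) (F a k) * d)]
    simp only [Finset.mem_univ, if_true]
    linear_combination ((starRingEnd ℂ) (F a (a+a-b))) * hcc
  have hreal : ∀ j, (starRingEnd ℂ) (KDQ d F a j) = KDQ d F a j := fun j =>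
    Complex.conj_eq_iff_im.mpr (h a j)
  have : F a b = (starRingEnd ℂ) (F a (a + a - b)) := by
    rw [← S1, ← S2]
    exact Finset.sum_congr rfl fun j _ => by rw [hreal j]
  rw [this]; exact hF.apply _ _

lemma shift_iter {d : ℕ} [NeZero d] {F : Matrix (Fin d) (Fin d) ℂ} (hs : shiftCond d F) :
    ∀ (n : ℕ) (a b : Fin d), F a b = F (a + n • (a - b)) (b + n • (a - b)) := by
  intro n
  induction n with
  | zero => intro a b; simp
  | succ n ih =>
    intro a b
    have h1 : F a b = F (a + (a-b)) (b + (a-b)) := by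
      have h := hs a b
      have e1 : a + a - b = a + (a - b) := by abel
      have e2 : b + (a - b) = a := by abel
      rw [e1] at h; rw [e2, ← h]
    rw [h1, ih (a + (a-b)) (b + (a-b))]
    have e3 : (a + (a-b)) - (b + (a-b)) = a - b := by abel
    rw [e3]
    congr 1 <;> · rw [succ_nsmul]; abel

lemma exists_nsmul_eq {d : ℕ} [NeZero d] (t c : Fin d) (h : (Nat.gcd t.val d) ∣ c.val) :
    ∃ n : ℕ, n • t = c := by
  have hd0 : (d:ℤ) ≠ 0 := by exact_mod_cast (NeZero.ne d)
  set g := Nat.gcd t.val d with hg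
  obtain ⟨k, hk⟩ := h
  have hB : (g:ℤ) = t.val * Nat.gcdA t.val d + d * Nat.gcdB t.val d := Nat.gcd_eq_gcd_ab t.val d
  set x : ℤ := Nat.gcdA t.val d * k with hx
  refine ⟨(x % d).toNat, ?_⟩
  apply fin_eq_of_modeq
  have hNx : (((x % d).toNat) : ℤ) = x % d := Int.toNat_of_nonneg (Int.emod_nonneg x hd0)
  have h2 : (((x % d).toNat) : ℤ) ≡ x [ZMOD d] := by
    rw [hNx]; exact Int.emod_emod_of_dvd _ dvd_rfl
  calc ((((x % d).toNat) • t : Fin d).val : ℤ)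
      ≡ (((x % d).toNat) : ℤ) * t.val [ZMOD d] := fin_val_nsmul _ t
    _ ≡ x * t.val [ZMOD d] := h2.mul_right _
    _ = (g:ℤ) * k - d * (Nat.gcdB t.val d * k) := by linear_combination (-(k:ℤ)) * hB
    _ ≡ (g:ℤ) * k - 0 [ZMOD d] := Int.ModEq.sub_left _ (Int.modEq_zero_iff_dvd.mpr ⟨_, rfl⟩)
    _ = (c.val : ℤ) := by rw [hk]; push_cast; ring

lemma shift_move {d : ℕ} [NeZero d] {F : Matrix (Fin d) (Fin d) ℂ} (hs : shiftCond d F)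
    (a b c : Fin d) (h : (Nat.gcd (a - b).val d) ∣ c.val) : F a b = F (a + c) (b + c) := by
  obtain ⟨n, hn⟩ := exists_nsmul_eq (a-b) c h
  rw [← hn]; exact shift_iter hs n a b

lemma natmodeq_iff {r x y : ℕ} : (x:ℤ) ≡ (y:ℤ) [ZMOD r] ↔ x % r = y % r := by
  unfold Int.ModEq
  rw [← Int.natCast_mod, ← Int.natCast_mod]
  exact ⟨fun h => by exact_mod_cast h, fun h => by exact_mod_cast h⟩

lemma nat_dvd_of_modeq_zero {r : ℕ} {x : ℕ} (h : (x:ℤ) ≡ 0 [ZMOD r]) : r ∣ x := by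
  have h2 : (x:ℤ) ≡ ((0:ℕ):ℤ) [ZMOD r] := by exact_mod_cast h
  have h3 := natmodeq_iff.mp h2
  rw [Nat.zero_mod] at h3
  exact Nat.dvd_of_mod_eq_zero h3

lemma keydiv {d r r' : ℕ} (hd : d = r * r') (hr : r ≠ 0) (x : Fin d) (y : ℤ)
    (h1 : (x.val : ℤ) ≡ (r:ℤ) * y + ((x.val % r : ℕ):ℤ) [ZMOD d]) :
    ((x.val / r : ℕ) : ℤ) ≡ y [ZMOD r'] := by
  obtain ⟨k, hk⟩ := h1.dvd
  have e : (x.val:ℤ) = r * (x.val / r : ℕ) + ((x.val % r : ℕ):ℤ) := by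
    exact_mod_cast (Nat.div_add_mod x.val r).symm
  have hdz : (d:ℤ) = (r:ℤ) * r' := by exact_mod_cast congrArg (Nat.cast (R := ℤ)) hd
  rw [hdz] at hk
  have h2 : (r:ℤ) * (y - ((x.val / r : ℕ):ℤ)) = (r:ℤ) * (r' * k) := by
    linear_combination hk + e
  have h3 := mul_left_cancel₀ (by exact_mod_cast hr : (r:ℤ) ≠ 0) h2
  exact Int.modEq_iff_dvd.mpr ⟨k, h3⟩

lemma mod_eq_iff_dvd_sub {d r r' : ℕ} (hd : d = r * r') (hr : r ≠ 0) (a b : Fin d) :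
    a.val % r = b.val % r ↔ r ∣ (a - b : Fin d).val := by
  have hrd : (r:ℤ) ∣ (d:ℤ) := Int.natCast_dvd_natCast.mpr ⟨r', hd⟩
  have h2 : (((a-b).val:ℕ):ℤ) ≡ (a.val:ℤ) - b.val [ZMOD r] := (fin_val_sub a b).of_dvd hrd
  constructor
  · intro h
    refine nat_dvd_of_modeq_zero (h2.trans ?_)
    have := natmodeq_iff.mpr h
    have h3 : (a.val:ℤ) - b.val ≡ (b.val:ℤ) - b.val [ZMOD r] := this.sub_right _
    simpa using h3
  · intro h
    have h4 : (((a-b).val:ℕ):ℤ) ≡ 0 [ZMOD r] := by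
      refine Int.modEq_zero_iff_dvd.mpr ?_
      exact_mod_cast h
    have h5 : (a.val:ℤ) - b.val ≡ 0 [ZMOD r] := h2.symm.trans h4
    refine natmodeq_iff.mp ?_
    have := h5.add_right (b.val:ℤ)
    simpa using this

lemma coprime_neg {r' : ℕ} [NeZero r'] (u : Fin r') :
    Nat.Coprime (-u : Fin r').val r' ↔ Nat.Coprime u.val r' := by
  by_cases h : u = 0
  · subst h; simp
  · have h1 : (-u : Fin r').val = r' - u.val := by
      rw [Fin.coe_neg]
      have h2 : u.val ≠ 0 := fun hh => h (Fin.ext hh)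
      have := u.isLt
      rw [Nat.mod_eq_of_lt (by omega)]
    rw [← ZMod.isUnit_iff_coprime, ← ZMod.isUnit_iff_coprime]
    have h2 : (((-u : Fin r').val : ℕ) : ZMod r') = -((u.val : ℕ) : ZMod r') := by
      rw [h1, Nat.cast_sub u.isLt.le, ZMod.natCast_self, zero_sub]
    rw [h2, IsUnit.neg_iff]

def idxF (d r : ℕ) [NeZero d] (u m : ℕ) : Fin d :=
  ⟨(u * r + m) % d, Nat.mod_lt _ (Nat.pos_of_ne_zero (NeZero.ne d))⟩

lemma idxF_val {d r : ℕ} [NeZero d] {u m : ℕ} (h : u * r + m < d) :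
    (idxF d r u m).val = u * r + m := Nat.mod_eq_of_lt h

lemma idxF_lt {d r r' : ℕ} (hd : d = r * r') (u : Fin r') (m : Fin r) :
    u.val * r + m.val < d := by
  have h1 := u.isLt; have h2 := m.isLt
  calc u.val * r + m.val < u.val * r + r := by omega
    _ = (u.val + 1) * r := by ring
    _ ≤ r' * r := Nat.mul_le_mul_right r h1
    _ = d := by rw [hd, mul_comm]

lemma proj_isHermitian (d : ℕ) (v : Fin d → ℂ) : (proj d v).IsHermitian := by
  ext i k
  simp only [conjTranspose_apply, proj, Matrix.of_apply, star_mul']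
  simp [mul_comm]

lemma psi_apply (d r r' : ℕ) (m : Fin r) (s : Fin r') (i : Fin d) :
    psiPQ d r r' m s i = if i.val % r = m.val then
      ((1 / Real.sqrt r' : ℝ) : ℂ) * omega r' ^ ((s.val:ℤ) * ((i.val / r : ℕ) : ℤ)) else 0 := by
  rw [psiPQ]
  by_cases h : i.val % r = m.val
  · rw [if_pos h, if_pos h]
    norm_cast
  · rw [if_neg h, if_neg h]

lemma fin_modeq_int {d r : ℕ} (hrd : r ∣ d) (a b : Fin d) :
    (((a + a - b : Fin d).val : ℕ) : ℤ) ≡ (a.val:ℤ) + a.val - b.val [ZMOD r] :=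
  ((fin_val_sub (a+a) b).trans ((fin_val_add a a).sub_right _)).of_dvd
    (Int.natCast_dvd_natCast.mpr hrd)

lemma psi_mod_int {r' : ℕ} {x m : ℕ} (hm : m < r') (h : (x:ℤ) ≡ (m:ℤ) [ZMOD r']) :
    x % r' = m := by
  have := natmodeq_iff.mp h
  rwa [Nat.mod_eq_of_lt hm] at this

lemma psi_shift {d r r' : ℕ} (hd : d = r * r') (hr : r ≠ 0) (hr' : r' ≠ 0)
    (m : Fin r) (s : Fin r') : shiftCond d (proj d (psiPQ d r r' m s)) := by
  haveI : NeZero d := ⟨by rw [hd]; exact Nat.mul_ne_zero hr hr'⟩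
  have hrd : r ∣ d := ⟨r', hd⟩
  intro a b
  show psiPQ d r r' m s a * (starRingEnd ℂ) (psiPQ d r r' m s b)
    = psiPQ d r r' m s (a+a-b) * (starRingEnd ℂ) (psiPQ d r r' m s a)
  have hX := fin_modeq_int hrd a b
  by_cases ha : a.val % r = m.val
  · have haz : (a.val:ℤ) ≡ (m.val:ℤ) [ZMOD r] := natmodeq_iff.mpr
      (ha.trans (Nat.mod_eq_of_lt m.isLt).symm)
    by_cases hb : b.val % r = m.val
    · -- all congruent to m
      have hbz : (b.val:ℤ) ≡ (m.val:ℤ) [ZMOD r] := natmodeq_iff.mpr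
        (hb.trans (Nat.mod_eq_of_lt m.isLt).symm)
      have hcz : (((a+a-b:Fin d).val:ℕ):ℤ) ≡ (m.val:ℤ) [ZMOD r] := by
        refine hX.trans ?_
        have := (haz.add haz).sub hbz
        simpa using this
      have hc : (a+a-b:Fin d).val % r = m.val := psi_mod_int m.isLt hcz
      rw [psi_apply, psi_apply, psi_apply, if_pos ha, if_pos hb, if_pos hc]
      set c' : ℂ := ((1 / Real.sqrt r' : ℝ) : ℂ) with hc'
      rw [_root_.map_mul, _root_.map_mul, Complex.conj_ofReal, conj_omega_zpow,
        conj_omega_zpow]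
      -- key congruence of the divided values
      have hkey : (((a+a-b:Fin d).val / r : ℕ) : ℤ)
          ≡ ((a.val/r : ℕ):ℤ) + (a.val/r : ℕ) - (b.val/r : ℕ) [ZMOD r'] := by
        refine keydiv hd hr (a+a-b) _ ?_
        have ea : (a.val:ℤ) = r * (a.val/r : ℕ) + ((a.val % r : ℕ):ℤ) := by
          exact_mod_cast (Nat.div_add_mod a.val r).symm
        have eb : (b.val:ℤ) = r * (b.val/r : ℕ) + ((b.val % r : ℕ):ℤ) := by
          exact_mod_cast (Nat.div_add_mod b.val r).symm
        have hXd : (((a+a-b:Fin d).val:ℕ):ℤ) ≡ (a.val:ℤ) + a.val - b.val [ZMOD d] :=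
          (fin_val_sub (a+a) b).trans ((fin_val_add a a).sub_right _)
        have hmm : (((a+a-b:Fin d).val % r : ℕ):ℤ) = (m.val:ℤ) := by exact_mod_cast hc
        refine hXd.trans (by rw [hmm, ea, eb, ha, hb]; push_cast; ring_nf; exact Int.ModEq.refl _)
      have hexp : omega r' ^ ((s.val:ℤ) * (a.val/r : ℕ)) * omega r' ^ (-((s.val:ℤ) * (b.val/r : ℕ)))
          = omega r' ^ ((s.val:ℤ) * ((a+a-b:Fin d).val/r : ℕ)) * omega r' ^ (-((s.val:ℤ) * (a.val/r : ℕ))) := by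
        rw [← zpow_add₀ (omega_ne_zero r'), ← zpow_add₀ (omega_ne_zero r')]
        refine omega_zpow_congr hr' ?_
        have h2 := (hkey.mul_left (s.val:ℤ)).symm
        calc (s.val:ℤ) * ((a.val/r : ℕ):ℤ) + -((s.val:ℤ) * ((b.val/r : ℕ):ℤ))
            = (s.val:ℤ) * (((a.val/r : ℕ):ℤ) + ((a.val/r : ℕ):ℤ) - ((b.val/r : ℕ):ℤ)) + -((s.val:ℤ) * ((a.val/r : ℕ):ℤ)) := by ring
          _ ≡ (s.val:ℤ) * (((a+a-b:Fin d).val / r : ℕ) : ℤ) + -((s.val:ℤ) * ((a.val/r : ℕ):ℤ)) [ZMOD r'] := h2.add_right _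
      linear_combination (c' * c') * hexp
    · -- b not congruent: both sides zero
      have hc : ¬ ((a+a-b:Fin d).val % r = m.val) := by
        intro hc
        have hcz : (((a+a-b:Fin d).val:ℕ):ℤ) ≡ (m.val:ℤ) [ZMOD r] := natmodeq_iff.mpr
          (hc.trans (Nat.mod_eq_of_lt m.isLt).symm)
        have hbz : (b.val:ℤ) ≡ (m.val:ℤ) [ZMOD r] := by
          have h1 : (b.val:ℤ) ≡ (a.val:ℤ) + a.val - ((a+a-b:Fin d).val:ℕ) [ZMOD r] := by
            have := ((Int.ModEq.refl ((a.val:ℤ) + a.val)).sub hX).symm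
            simpa using this
          refine h1.trans ?_
          have := (haz.add haz).sub hcz
          simpa using this
        exact hb (psi_mod_int m.isLt hbz)
      rw [psi_apply, psi_apply, psi_apply, if_neg hb, if_neg hc, map_zero, mul_zero, zero_mul]
  · -- a not congruent: both sides zero
    rw [psi_apply, if_neg ha, map_zero, mul_zero, zero_mul]

def cGen (d r r' : ℕ) [NeZero d] (F : Matrix (Fin d) (Fin d) ℂ) (m : Fin r) (s : Fin r') : ℂ :=
  ∑ u : Fin r', if Nat.Coprime u.val r' then
    F (idxF d r u.val m.val) (idxF d r 0 m.val) * omega r' ^ (-((s.val:ℤ) * u.val)) else 0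

lemma fin_neg_val_int {r' : ℕ} [NeZero r'] (u : Fin r') :
    (((-u : Fin r').val : ℕ) : ℤ) ≡ -(u.val:ℤ) [ZMOD r'] := by
  have := fin_val_sub (0 : Fin r') u
  simpa using this

lemma cGen_im {d r r' : ℕ} [NeZero d] (hd : d = r * r') (hr : r ≠ 0) (hr' : r' ≠ 0)
    {F : Matrix (Fin d) (Fin d) ℂ} (hF : F.IsHermitian) (hs : shiftCond d F)
    (m : Fin r) (s : Fin r') : (cGen d r r' F m s).im = 0 := by
  haveI : NeZero r' := ⟨hr'⟩
  rw [← Complex.conj_eq_iff_im]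
  have hm_lt : (0:ℕ) * r + m.val < d := by
    simp only [Nat.zero_mul, Nat.zero_add]
    calc m.val < r := m.isLt
      _ ≤ d := by rw [hd]; exact Nat.le_mul_of_pos_right r (Nat.pos_of_ne_zero hr')
  have key : ∀ u : Fin r',
      (starRingEnd ℂ) (if Nat.Coprime (-u : Fin r').val r' then
        F (idxF d r (-u : Fin r').val m.val) (idxF d r 0 m.val) * omega r' ^ (-((s.val:ℤ) * (-u : Fin r').val)) else 0)
      = (if Nat.Coprime u.val r' then
        F (idxF d r u.val m.val) (idxF d r 0 m.val) * omega r' ^ (-((s.val:ℤ) * u.val)) else 0) := by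
    intro u
    rw [apply_ite (starRingEnd ℂ), map_zero, _root_.map_mul, conj_omega_zpow]
    have hcop := coprime_neg (r' := r') u
    by_cases hc : Nat.Coprime u.val r'
    · rw [if_pos (hcop.mpr hc), if_pos hc]
      have hneg := fin_neg_val_int u
      congr 1
      · -- conj F... = F ...
        have h1 : (starRingEnd ℂ) (F (idxF d r (-u : Fin r').val m.val) (idxF d r 0 m.val))
            = F (idxF d r 0 m.val) (idxF d r (-u : Fin r').val m.val) := hF.apply _ _
        rw [h1, hs]
        congr 1
        apply fin_eq_of_modeq
        have e0 : (idxF d r 0 m.val : Fin d).val = m.val := by have := idxF_val hm_lt; omega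
        have eneg : (idxF d r (-u : Fin r').val m.val : Fin d).val = (-u : Fin r').val * r + m.val :=
          idxF_val (idxF_lt hd _ m)
        have eu : (idxF d r u.val m.val : Fin d).val = u.val * r + m.val :=
          idxF_val (idxF_lt hd u m)
        have hXd : (((idxF d r 0 m.val + idxF d r 0 m.val - idxF d r (-u : Fin r').val m.val : Fin d).val:ℕ):ℤ)
            ≡ ((idxF d r 0 m.val : Fin d).val:ℤ) + ((idxF d r 0 m.val : Fin d).val:ℤ)
              - ((idxF d r (-u : Fin r').val m.val : Fin d).val:ℤ) [ZMOD d] :=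
          (fin_val_sub _ _).trans ((fin_val_add _ _).sub_right _)
        rw [e0, eneg] at hXd
        refine hXd.trans ?_
        rw [eu]
        -- m + m - ((-u)*r + m) ≡ u*r + m [ZMOD d]
        obtain ⟨k, hk⟩ := (fin_neg_val_int u).dvd
        refine Int.modEq_iff_dvd.mpr ⟨-k, ?_⟩
        have hdz : (d:ℤ) = (r:ℤ) * r' := by exact_mod_cast congrArg (Nat.cast (R := ℤ)) hd
        rw [hdz]
        push_cast
        linear_combination (-(r:ℤ)) * hk
      · -- omega powers
        refine omega_zpow_congr hr' ?_
        have h := ((fin_neg_val_int u).mul_left (s.val:ℤ))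
        simp only [neg_neg]
        rw [show -((s.val:ℤ) * u.val) = (s.val:ℤ) * (-(u.val:ℤ)) by ring]
        exact h
    · rw [if_neg (fun hh => hc (hcop.mp hh)), if_neg hc]
  calc (starRingEnd ℂ) (cGen d r r' F m s)
      = ∑ u : Fin r', (starRingEnd ℂ) (if Nat.Coprime u.val r' then
          F (idxF d r u.val m.val) (idxF d r 0 m.val) * omega r' ^ (-((s.val:ℤ) * u.val)) else 0) := by
        rw [cGen, map_sum]
    _ = ∑ u : Fin r', (starRingEnd ℂ) (if Nat.Coprime (-u : Fin r').val r' then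
          F (idxF d r (-u : Fin r').val m.val) (idxF d r 0 m.val) * omega r' ^ (-((s.val:ℤ) * (-u : Fin r').val)) else 0) :=
        (Fintype.sum_equiv (Equiv.neg (Fin r')) _ _ (fun u => by simp [Equiv.neg])).symm
    _ = cGen d r r' F m s := by rw [cGen]; exact Finset.sum_congr rfl (fun u _ => key u)

lemma proj_apply (d : ℕ) (v : Fin d → ℂ) (a b : Fin d) :
    proj d v a b = v a * (starRingEnd ℂ) (v b) := rfl

lemma cnorm (r' : ℕ) (hr' : r' ≠ 0) :
    ((1 / Real.sqrt r' : ℝ) : ℂ) * ((1 / Real.sqrt r' : ℝ) : ℂ) * (r':ℂ) = 1 := by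
  have h1 : (1 / Real.sqrt r') * (1 / Real.sqrt r') = 1/(r':ℝ) := by
    rw [div_mul_div_comm, one_mul, Real.mul_self_sqrt (Nat.cast_nonneg r')]
  have h2 : ((r':ℂ)) ≠ 0 := Nat.cast_ne_zero.mpr hr'
  rw [← Complex.ofReal_mul, h1]
  push_cast
  exact one_div_mul_cancel h2

lemma master_entry {d r r' : ℕ} [NeZero d] (hd : d = r * r') (hr : r ≠ 0) (hr' : r' ≠ 0)
    {F : Matrix (Fin d) (Fin d) ℂ} (hF : F.IsHermitian) (hs : shiftCond d F) (a b : Fin d) :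
    ∑ m : Fin r, ∑ s : Fin r', cGen d r r' F m s * proj d (psiPQ d r r' m s) a b
      = if r ∣ (a - b : Fin d).val ∧ Nat.Coprime ((a - b : Fin d).val / r) r' then F a b else 0 := by
  haveI : NeZero r' := ⟨hr'⟩
  have hrpos : 0 < r := Nat.pos_of_ne_zero hr
  have hrd : r ∣ d := ⟨r', hd⟩
  have hrdz : (r:ℤ) ∣ (d:ℤ) := Int.natCast_dvd_natCast.mpr hrd
  by_cases hab : a.val % r = b.val % r
  case neg =>
    rw [if_neg (fun h => hab ((mod_eq_iff_dvd_sub hd hr a b).mpr h.1))]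
    refine Finset.sum_eq_zero fun m _ => Finset.sum_eq_zero fun s _ => ?_
    have hz : psiPQ d r r' m s a * (starRingEnd ℂ) (psiPQ d r r' m s b) = 0 := by
      by_cases hma : a.val % r = m.val
      · have hmb : ¬ (b.val % r = m.val) := fun h => hab (hma.trans h.symm)
        rw [psi_apply d r r' m s b, if_neg hmb, map_zero, mul_zero]
      · rw [psi_apply d r r' m s a, if_neg hma, zero_mul]
    rw [proj_apply, hz, mul_zero]
  case pos =>
    have hm0 : a.val % r < r := Nat.mod_lt _ hrpos
    set mF : Fin r := ⟨a.val % r, hm0⟩ with hmF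
    have htr : r ∣ (a - b : Fin d).val := (mod_eq_iff_dvd_sub hd hr a b).mp hab
    have htlt : (a - b : Fin d).val / r < r' := by
      have h1 := (a - b : Fin d).isLt
      rw [Nat.div_lt_iff_lt_mul hrpos]
      calc (a - b : Fin d).val < d := h1
        _ = r' * r := by rw [hd, Nat.mul_comm]
    set u0 : Fin r' := ⟨(a - b : Fin d).val / r, htlt⟩ with hu0
    have e1 : (a - b : Fin d).val % r = 0 := by obtain ⟨cq, hcq⟩ := htr; rw [hcq, Nat.mul_mod_right]
    have hu0c : ((u0.val : ℕ) : ℤ) ≡ ((a.val / r : ℕ) : ℤ) - ((b.val / r : ℕ) : ℤ) [ZMOD r'] := by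
      refine keydiv hd hr (a - b) _ ?_
      have ea : (a.val:ℤ) = r * ((a.val / r : ℕ) : ℤ) + ((a.val % r : ℕ):ℤ) := by
        exact_mod_cast (Nat.div_add_mod a.val r).symm
      have eb : (b.val:ℤ) = r * ((b.val / r : ℕ) : ℤ) + ((b.val % r : ℕ):ℤ) := by
        exact_mod_cast (Nat.div_add_mod b.val r).symm
      have hmabz : ((a.val % r : ℕ):ℤ) = ((b.val % r : ℕ):ℤ) := by exact_mod_cast hab
      refine (fin_val_sub a b).trans ?_
      have e2 : (a.val:ℤ) - b.val
          = r * (((a.val / r : ℕ) : ℤ) - ((b.val / r : ℕ) : ℤ)) + (((a - b : Fin d).val % r : ℕ):ℤ) := by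
        have e1z : (((a - b : Fin d).val % r : ℕ):ℤ) = 0 := by exact_mod_cast e1
        rw [e1z]
        linear_combination ea - eb + hmabz
      rw [← e2]
    have hpa : a.val % r = mF.val := rfl
    have hpb : b.val % r = mF.val := hab.symm
    rw [Finset.sum_eq_single mF (fun m _ hm => Finset.sum_eq_zero fun s _ => by
      have hma : ¬ (a.val % r = m.val) := fun h => hm (Fin.ext (h.symm.trans hpa))
      rw [proj_apply, psi_apply d r r' m s a, if_neg hma, zero_mul, mul_zero])
      (fun h => absurd (Finset.mem_univ mF) h)]
    have hentry : ∀ s : Fin r', proj d (psiPQ d r r' mF s) a b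
        = (((1 / Real.sqrt r' : ℝ) : ℂ) * omega r' ^ ((s.val:ℤ) * ((a.val / r : ℕ) : ℤ)))
          * (((1 / Real.sqrt r' : ℝ) : ℂ) * omega r' ^ (-((s.val:ℤ) * ((b.val / r : ℕ) : ℤ)))) := by
      intro s
      rw [proj_apply, psi_apply d r r' mF s a, psi_apply d r r' mF s b, if_pos hpa, if_pos hpb,
        _root_.map_mul, Complex.conj_ofReal, conj_omega_zpow]
    rw [Finset.sum_congr rfl (fun s _ => by rw [hentry s, cGen, Finset.sum_mul])]
    rw [Finset.sum_comm]
    have step : ∀ u : Fin r',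
        (∑ s : Fin r', (if Nat.Coprime u.val r' then
          F (idxF d r u.val mF.val) (idxF d r 0 mF.val) * omega r' ^ (-((s.val:ℤ) * u.val)) else 0)
            * ((((1 / Real.sqrt r' : ℝ) : ℂ) * omega r' ^ ((s.val:ℤ) * ((a.val / r : ℕ) : ℤ)))
              * (((1 / Real.sqrt r' : ℝ) : ℂ) * omega r' ^ (-((s.val:ℤ) * ((b.val / r : ℕ) : ℤ))))))
        = if u = u0 then (if Nat.Coprime u0.val r' then
            F (idxF d r u0.val mF.val) (idxF d r 0 mF.val) else 0) else 0 := by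
      intro u
      by_cases hcop : Nat.Coprime u.val r'
      · simp only [if_pos hcop]
        have hterm : ∀ s : Fin r',
            (F (idxF d r u.val mF.val) (idxF d r 0 mF.val) * omega r' ^ (-((s.val:ℤ) * u.val)))
              * ((((1 / Real.sqrt r' : ℝ) : ℂ) * omega r' ^ ((s.val:ℤ) * ((a.val / r : ℕ) : ℤ)))
                * (((1 / Real.sqrt r' : ℝ) : ℂ) * omega r' ^ (-((s.val:ℤ) * ((b.val / r : ℕ) : ℤ)))))
            = (F (idxF d r u.val mF.val) (idxF d r 0 mF.val)
                * (((1 / Real.sqrt r' : ℝ) : ℂ) * ((1 / Real.sqrt r' : ℝ) : ℂ)))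
              * omega r' ^ ((((a.val / r : ℕ) : ℤ) - ((b.val / r : ℕ) : ℤ) - u.val) * (s.val:ℤ)) := by
          intro s
          have hz : omega r' ^ (-((s.val:ℤ) * u.val)) * (omega r' ^ ((s.val:ℤ) * ((a.val / r : ℕ) : ℤ))
              * omega r' ^ (-((s.val:ℤ) * ((b.val / r : ℕ) : ℤ))))
              = omega r' ^ ((((a.val / r : ℕ) : ℤ) - ((b.val / r : ℕ) : ℤ) - u.val) * (s.val:ℤ)) := by
            rw [← zpow_add₀ (omega_ne_zero r'), ← zpow_add₀ (omega_ne_zero r')]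
            congr 1; ring
          linear_combination (F (idxF d r u.val mF.val) (idxF d r 0 mF.val)
            * ((1 / Real.sqrt r' : ℝ) : ℂ) * ((1 / Real.sqrt r' : ℝ) : ℂ)) * hz
        rw [Finset.sum_congr rfl (fun s _ => hterm s), ← Finset.mul_sum, rootsum hr']
        by_cases huu : u = u0
        · have hcop0 : Nat.Coprime u0.val r' := by rw [← huu]; exact hcop
          have hdvd0 : (r':ℤ) ∣ ((a.val / r : ℕ):ℤ) - ((b.val / r : ℕ):ℤ) - (u.val:ℤ) := by
            rw [huu]; exact hu0c.dvd
          rw [if_pos hdvd0, if_pos huu, if_pos hcop0, huu]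
          linear_combination (F (idxF d r u0.val mF.val) (idxF d r 0 mF.val)) * cnorm r' hr'
        · rw [if_neg (fun hdvd => huu (fin_eq_of_modeq (d := r')
            ((Int.modEq_iff_dvd.mpr hdvd).trans hu0c.symm))), if_neg huu, mul_zero]
      · simp only [if_neg hcop, zero_mul, Finset.sum_const_zero]
        by_cases huu : u = u0
        · rw [if_pos huu, if_neg (show ¬ Nat.Coprime u0.val r' by rw [← huu]; exact hcop)]
        · rw [if_neg huu]
    rw [Finset.sum_congr rfl (fun u _ => step u), Finset.sum_ite_eq' Finset.univ u0 _,
      if_pos (Finset.mem_univ u0)]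
    by_cases hcu : Nat.Coprime ((a - b : Fin d).val / r) r'
    · rw [if_pos hcu, if_pos ⟨htr, hcu⟩]
      have hgcd : Nat.gcd (a - b : Fin d).val d = r := by
        have e3 : (a - b : Fin d).val = r * u0.val := (Nat.mul_div_cancel' htr).symm
        rw [e3, hd, Nat.gcd_mul_left, Nat.Coprime.gcd_eq_one hcu, mul_one]
      have h0lt : (0:ℕ) * r + mF.val < d := by
        have h1 := mF.isLt
        have h2 : r ≤ d := by
          rw [hd]; exact Nat.le_mul_of_pos_right r (Nat.pos_of_ne_zero hr')
        omega
      have e0v : (idxF d r 0 mF.val : Fin d).val = mF.val := by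
        have := idxF_val h0lt; omega
      have hccd : r ∣ (idxF d r 0 mF.val - b : Fin d).val := by
        apply nat_dvd_of_modeq_zero
        have h1 : (((idxF d r 0 mF.val - b : Fin d).val:ℕ):ℤ)
            ≡ ((idxF d r 0 mF.val : Fin d).val:ℤ) - (b.val:ℤ) [ZMOD r] :=
          (fin_val_sub _ _).of_dvd hrdz
        rw [e0v] at h1
        refine h1.trans ?_
        have hbz : (b.val:ℤ) ≡ (mF.val:ℤ) [ZMOD r] :=
          natmodeq_iff.mpr (hpb.trans (Nat.mod_eq_of_lt hm0).symm)
        simpa using ((Int.ModEq.refl (mF.val:ℤ)).sub hbz)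
      have hmove := shift_move hs a b (idxF d r 0 mF.val - b) (by rw [hgcd]; exact hccd)
      rw [hmove]
      have hb_cc : b + (idxF d r 0 mF.val - b) = idxF d r 0 mF.val := by abel
      have ha_cc : a + (idxF d r 0 mF.val - b) = idxF d r u0.val mF.val := by
        apply fin_eq_of_modeq
        have h1 : ((a + (idxF d r 0 mF.val - b)).val:ℤ)
            ≡ (a.val:ℤ) + ((idxF d r 0 mF.val - b : Fin d).val:ℤ) [ZMOD d] := fin_val_add _ _
        have h2 : (((idxF d r 0 mF.val - b : Fin d).val:ℕ):ℤ)
            ≡ (mF.val:ℤ) - b.val [ZMOD d] := by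
          have h := fin_val_sub (idxF d r 0 mF.val) b
          rw [e0v] at h; exact h
        have h3 : (((a - b : Fin d).val:ℕ):ℤ) ≡ (a.val:ℤ) - b.val [ZMOD d] := fin_val_sub a b
        have euv : (idxF d r u0.val mF.val : Fin d).val = u0.val * r + mF.val :=
          idxF_val (idxF_lt hd u0 mF)
        rw [euv]
        have e3 : (a - b : Fin d).val = r * u0.val := (Nat.mul_div_cancel' htr).symm
        calc ((a + (idxF d r 0 mF.val - b)).val:ℤ)
            ≡ (a.val:ℤ) + ((idxF d r 0 mF.val - b : Fin d).val:ℤ) [ZMOD d] := h1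
          _ ≡ (a.val:ℤ) + ((mF.val:ℤ) - b.val) [ZMOD d] := h2.add_left _
          _ = ((a.val:ℤ) - b.val) + mF.val := by ring
          _ ≡ (((a - b : Fin d).val:ℕ):ℤ) + mF.val [ZMOD d] := h3.symm.add_right _
          _ = ((u0.val * r + mF.val : ℕ):ℤ) := by
              have e3z : ((a - b : Fin d).val:ℤ) = (r:ℤ) * (((a - b : Fin d).val / r : ℕ):ℤ) := by
                exact_mod_cast e3
              rw [Nat.cast_add, Nat.cast_mul, e3z]
              ring
      rw [ha_cc, hb_cc]
    · rw [if_neg hcu, if_neg (fun h => hcu h.2)]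

lemma ofReal_re_of_im_zero {z : ℂ} (h : z.im = 0) : ((z.re : ℝ) : ℂ) = z :=
  Complex.ext (by simp) (by simp [h])

def KDrSub (d : ℕ) : Submodule ℝ (Matrix (Fin d) (Fin d) ℂ) where
  carrier := KDr d
  zero_mem' := ⟨Matrix.isHermitian_zero, fun i j => by simp [KDQ]⟩
  add_mem' := by
    rintro F G ⟨hF1, hF2⟩ ⟨hG1, hG2⟩
    refine ⟨hF1.add hG1, fun i j => ?_⟩
    have e : KDQ d (F + G) i j = KDQ d F i j + KDQ d G i j := by
      rw [KDQ, KDQ, KDQ, ← mul_add, ← Finset.sum_add_distrib]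
      congr 1
      refine Finset.sum_congr rfl fun k _ => ?_
      rw [Matrix.add_apply, add_mul]
    rw [e, Complex.add_im, hF2 i j, hG2 i j, add_zero]
  smul_mem' := by
    rintro c F ⟨hF1, hF2⟩
    constructor
    · show (c • F)ᴴ = c • F
      ext i j
      simp only [Matrix.conjTranspose_apply, Matrix.smul_apply, star_smul, star_trivial]
      rw [hF1.apply]
    · intro i j
      have e : KDQ d (c • F) i j = (c:ℂ) * KDQ d F i j := by
        rw [KDQ, KDQ]
        have e2 : ∑ k, (c • F) i k * fourierVec d j k
            = (c:ℂ) * ∑ k, F i k * fourierVec d j k := by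
          rw [Finset.mul_sum]
          refine Finset.sum_congr rfl fun k _ => ?_
          rw [Matrix.smul_apply, Complex.real_smul]; ring
        rw [e2]; ring
      rw [e]
      simp [Complex.mul_im, hF2 i j]

lemma stdVec_eq_psi (d : ℕ) (i : Fin d) (s : Fin 1) : psiPQ d d 1 i s = stdVec d i := by
  funext k
  rw [psiPQ, stdVec]
  have hk : k.val % d = k.val := Nat.mod_eq_of_lt k.isLt
  have hs : s.val = 0 := by omega
  by_cases h : k = i
  · subst h
    rw [if_pos hk, if_pos rfl, hs]
    simp [Real.sqrt_one]
  · rw [if_neg (fun hh => h (Fin.ext (by rw [← hk, hh]))), if_neg h]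

lemma fourier_eq_psi (d : ℕ) (j : Fin d) (m : Fin 1) : psiPQ d 1 d m j = fourierVec d j := by
  funext i
  rw [psiPQ, fourierVec]
  have hm : m.val = 0 := by omega
  rw [if_pos (by rw [hm]; exact Nat.mod_one _)]
  rw [Nat.div_one, Nat.mul_comm]

lemma phi_eq_psi (d p q : ℕ) (m' : Fin q) (s' : Fin p) : phiPQ d p q m' s' = psiPQ d q p m' s' := rfl

lemma four_conds {p q d : ℕ} (hp : p.Prime) (hq : q.Prime) (hpq : p ≠ q) (hd : d = p * q)
    (n : ℕ) (hn : n < d) (x : ℂ) :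
    (if d ∣ n ∧ Nat.Coprime (n / d) 1 then x else 0)
      + (if 1 ∣ n ∧ Nat.Coprime (n / 1) d then x else 0)
      + (if p ∣ n ∧ Nat.Coprime (n / p) q then x else 0)
      + (if q ∣ n ∧ Nat.Coprime (n / q) p then x else 0) = x := by
  have hp1 := hp.one_lt
  have hq1 := hq.one_lt
  have hcpq : Nat.Coprime p q := (Nat.coprime_primes hp hq).mpr hpq
  by_cases h0 : n = 0
  · subst h0
    rw [if_pos ⟨dvd_zero d, Nat.coprime_one_right _⟩]
    rw [if_neg, if_neg, if_neg]
    · ring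
    · rintro ⟨-, hc⟩
      rw [Nat.zero_div] at hc
      exact Nat.Prime.one_lt hp |>.ne' (Nat.coprime_zero_left p |>.mp hc)
    · rintro ⟨-, hc⟩
      rw [Nat.zero_div] at hc
      exact Nat.Prime.one_lt hq |>.ne' (Nat.coprime_zero_left q |>.mp hc)
    · rintro ⟨-, hc⟩
      rw [Nat.div_one] at hc
      have := Nat.coprime_zero_left d |>.mp hc
      have hd2 : 2 * 2 ≤ p * q := Nat.mul_le_mul hp.two_le hq.two_le
      omega
  · have hnd : ¬ d ∣ n := fun h => h0 (Nat.eq_zero_of_dvd_of_lt h hn)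
    rw [if_neg (fun h => hnd h.1)]
    by_cases hpn : p ∣ n
    · have hqn : ¬ q ∣ n := fun hqn => hnd (hd ▸ hcpq.mul_dvd_of_dvd_of_dvd hpn hqn)
      have hc3 : Nat.Coprime (n / p) q := by
        refine (Nat.Prime.coprime_iff_not_dvd hq).mpr ?_ |>.symm
        intro hdvd
        exact hqn (dvd_trans hdvd (Nat.div_dvd_of_dvd hpn))
      have hc2 : ¬ Nat.Coprime (n / 1) d := by
        rw [Nat.div_one]
        intro hc
        have h1 : Nat.Coprime n p := hc.coprime_dvd_right (show p ∣ d by rw [hd]; exact dvd_mul_right p q)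
        have h2 : p ∣ Nat.gcd n p := Nat.dvd_gcd hpn dvd_rfl
        rw [Nat.Coprime.gcd_eq_one h1] at h2
        exact absurd (Nat.le_of_dvd one_pos h2) (by omega)
      rw [if_neg (fun h => hc2 h.2), if_pos ⟨hpn, hc3⟩, if_neg (fun h => hqn h.1)]
      ring
    · by_cases hqn : q ∣ n
      · have hc4 : Nat.Coprime (n / q) p := by
          refine (Nat.Prime.coprime_iff_not_dvd hp).mpr ?_ |>.symm
          intro hdvd
          exact hpn (dvd_trans hdvd (Nat.div_dvd_of_dvd hqn))
        have hc2 : ¬ Nat.Coprime (n / 1) d := by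
          rw [Nat.div_one]
          intro hc
          have h1 : Nat.Coprime n q := hc.coprime_dvd_right
            (show q ∣ d by rw [hd]; exact dvd_mul_left q p)
          have h2 : q ∣ Nat.gcd n q := Nat.dvd_gcd hqn dvd_rfl
          rw [Nat.Coprime.gcd_eq_one h1] at h2
          exact absurd (Nat.le_of_dvd one_pos h2) (by omega)
        rw [if_neg (fun h => hc2 h.2), if_neg (fun h => hpn h.1), if_pos ⟨hqn, hc4⟩]
        ring
      · have hc2 : Nat.Coprime (n / 1) d := by
          rw [Nat.div_one, hd]
          exact Nat.Coprime.mul_right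
            (((Nat.Prime.coprime_iff_not_dvd hp).mpr hpn).symm)
            (((Nat.Prime.coprime_iff_not_dvd hq).mpr hqn).symm)
        rw [if_pos ⟨one_dvd _, hc2⟩, if_neg (fun h => hpn h.1), if_neg (fun h => hqn h.1)]
        ring

/-- For `d = pq` with `p, q` distinct primes,
`span_ℝ(A ∪ B ∪ C ∪ D) = KD^r`. -/
theorem stmt9 (p q d : ℕ) (hp : p.Prime) (hq : q.Prime) (hpq : p ≠ q)
    (hd : d = p * q) :
    (Submodule.span ℝ (setA d ∪ setB d ∪ setC d p q ∪ setD d p q) :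
        Set (Matrix (Fin d) (Fin d) ℂ)) = KDr d := by
  have hp0 : p ≠ 0 := hp.ne_zero
  have hq0 : q ≠ 0 := hq.ne_zero
  have hd0 : d ≠ 0 := by rw [hd]; exact Nat.mul_ne_zero hp0 hq0
  haveI : NeZero d := ⟨hd0⟩
  set S := setA d ∪ setB d ∪ setC d p q ∪ setD d p q with hS
  have hgen : ∀ M ∈ S, M.IsHermitian ∧ shiftCond d M := by
    intro M hM
    rcases hM with ((hA | hB) | hC) | hD
    · obtain ⟨i, rfl⟩ := hA
      refine ⟨proj_isHermitian d _, ?_⟩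
      rw [← stdVec_eq_psi d i 0]
      exact psi_shift (d := d) (r := d) (r' := 1) (by ring) hd0 one_ne_zero i 0
    · obtain ⟨j, rfl⟩ := hB
      refine ⟨proj_isHermitian d _, ?_⟩
      rw [← fourier_eq_psi d j 0]
      exact psi_shift (d := d) (r := 1) (r' := d) (by ring) one_ne_zero hd0 0 j
    · obtain ⟨m, s, rfl⟩ := hC
      exact ⟨proj_isHermitian d _, psi_shift hd hp0 hq0 m s⟩
    · obtain ⟨m', s', rfl⟩ := hD
      rw [phi_eq_psi]
      exact ⟨proj_isHermitian d _, psi_shift (by rw [hd, Nat.mul_comm]) hq0 hp0 m' s'⟩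
  apply Set.Subset.antisymm
  · have hle : Submodule.span ℝ S ≤ KDrSub d := by
      rw [Submodule.span_le]
      intro M hM
      obtain ⟨h1, h2⟩ := hgen M hM
      exact ⟨h1, real_of_shift hd0 h1 h2⟩
    exact fun x hx => hle hx
  · intro F hF
    obtain ⟨hFh, hFr⟩ := hF
    have hs : shiftCond d F := shift_of_real hd0 hFh hFr
    have key : ∀ (r r' : ℕ), d = r * r' → r ≠ 0 → r' ≠ 0 → ∀ a b : Fin d,
        (∑ m : Fin r, ∑ s : Fin r', ((cGen d r r' F m s).re : ℝ) • proj d (psiPQ d r r' m s)) a b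
          = if r ∣ (a - b : Fin d).val ∧ Nat.Coprime ((a - b : Fin d).val / r) r'
            then F a b else 0 := by
      intro r r' h1 h2 h3 a b
      simp only [Matrix.sum_apply, Matrix.smul_apply]
      rw [Finset.sum_congr rfl (fun m _ => Finset.sum_congr rfl (fun s _ => by
        rw [Complex.real_smul, ofReal_re_of_im_zero (cGen_im h1 h2 h3 hFh hs m s)]))]
      exact master_entry h1 h2 h3 hFh hs a b
    have hdecomp : F
        = (∑ m : Fin d, ∑ s : Fin 1, ((cGen d d 1 F m s).re : ℝ) • proj d (psiPQ d d 1 m s))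
        + (∑ m : Fin 1, ∑ s : Fin d, ((cGen d 1 d F m s).re : ℝ) • proj d (psiPQ d 1 d m s))
        + (∑ m : Fin p, ∑ s : Fin q, ((cGen d p q F m s).re : ℝ) • proj d (psiPQ d p q m s))
        + (∑ m : Fin q, ∑ s : Fin p, ((cGen d q p F m s).re : ℝ) • proj d (psiPQ d q p m s)) := by
      ext a b
      rw [Matrix.add_apply, Matrix.add_apply, Matrix.add_apply,
        key d 1 (by ring) hd0 one_ne_zero a b, key 1 d (by ring) one_ne_zero hd0 a b,
        key p q hd hp0 hq0 a b, key q p (by rw [hd, Nat.mul_comm]) hq0 hp0 a b]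
      exact (four_conds hp hq hpq hd (a - b : Fin d).val (a - b : Fin d).isLt (F a b)).symm
    rw [hdecomp]
    have m1 : ∀ (m : Fin d) (s : Fin 1), proj d (psiPQ d d 1 m s) ∈ S := fun m s =>
      Set.mem_union_left _ (Set.mem_union_left _ (Set.mem_union_left _
        ⟨m, congrArg (proj d) (stdVec_eq_psi d m s)⟩))
    have m2 : ∀ (m : Fin 1) (s : Fin d), proj d (psiPQ d 1 d m s) ∈ S := fun m s =>
      Set.mem_union_left _ (Set.mem_union_left _ (Set.mem_union_right _
        ⟨s, congrArg (proj d) (fourier_eq_psi d s m)⟩))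
    have m3 : ∀ (m : Fin p) (s : Fin q), proj d (psiPQ d p q m s) ∈ S := fun m s =>
      Set.mem_union_left _ (Set.mem_union_right _ ⟨m, s, rfl⟩)
    have m4 : ∀ (m : Fin q) (s : Fin p), proj d (psiPQ d q p m s) ∈ S := fun m s =>
      Set.mem_union_right _ ⟨m, s, congrArg (proj d) (phi_eq_psi d p q m s)⟩
    refine Submodule.add_mem _ (Submodule.add_mem _ (Submodule.add_mem _ ?_ ?_) ?_) ?_
    · exact Submodule.sum_mem _ fun m _ => Submodule.sum_mem _ fun s _ =>
        Submodule.smul_mem _ _ (Submodule.subset_span (m1 m s))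
    · exact Submodule.sum_mem _ fun m _ => Submodule.sum_mem _ fun s _ =>
        Submodule.smul_mem _ _ (Submodule.subset_span (m2 m s))
    · exact Submodule.sum_mem _ fun m _ => Submodule.sum_mem _ fun s _ =>
        Submodule.smul_mem _ _ (Submodule.subset_span (m3 m s))
    · exact Submodule.sum_mem _ fun m _ => Submodule.sum_mem _ fun s _ =>
        Submodule.smul_mem _ _ (Submodule.subset_span (m4 m s))
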